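/- Let R > 0 and let K ⊆ ℝ^n be an R-ball convex body with 0 ∈ int(K). Then there exist constants γ > 0 and δ₀ > 0, depending only on n and K, such that for all 0 < δ ≤ δ₀ the following holds: for every x ∈ ∂K, every unit vector ν ∈ ℝ^n with ⟨y − x, ν⟩ ≤ 0 for all y ∈ K (an outer normal of K at x), every ρ > 0 with closedBall(x − ρν, ρ) ⊆ K, and every point x_δ lying both on the segment [0, x] and on the boundary ∂K_δ^R of the R-ball floating body, one has ‖x − x_δ‖ ≤ γ · ρ^{−(n−1)/(n+1)} · δ^{2/(n+1)}. -/

import Mathlib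

open MeasureTheory
open scoped RealInnerProductSpace

/-- The `R`-ball floating body `K_δ^R` of `K ⊆ ℝⁿ`. -/
def ballFloatingBody (n : ℕ) (R δ : ℝ) (K : Set (EuclideanSpace ℝ (Fin n))) :
    Set (EuclideanSpace ℝ (Fin n)) :=
  ⋂ y ∈ {y : EuclideanSpace ℝ (Fin n) |
      volume (K \ Metric.closedBall y R) ≤ ENNReal.ofReal δ}, Metric.closedBall y R

/-- `K` is an `R`-ball convex body: compact, with nonempty interior, and equal to the
intersection of all closed balls of radius `R` containing it. -/
def IsBallConvexBody (n : ℕ) (R : ℝ) (K : Set (EuclideanSpace ℝ (Fin n))) : Prop :=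
  IsCompact K ∧ (interior K).Nonempty ∧
    K = ⋂ y ∈ {y : EuclideanSpace ℝ (Fin n) | K ⊆ Metric.closedBall y R}, Metric.closedBall y R

namespace BallBodyAux

open Metric Matrix

variable {n : ℕ}

/-- A small ball pushed away from `y` along `p - y` escapes `closedBall y R`. -/
lemma escape_ball {p y : EuclideanSpace ℝ (Fin n)} {R r : ℝ} (hr : 0 < r)
    (hp : R < ‖p - y‖) (hR : 0 ≤ R) (z : EuclideanSpace ℝ (Fin n))
    (hz : z ∈ closedBall (p + (r / ‖p - y‖) • (p - y)) r) :
    z ∉ closedBall y R := by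
  set d := ‖p - y‖ with hd
  have hdpos : 0 < d := lt_of_le_of_lt hR hp
  have hz' : ‖z - p - (r / d) • (p - y)‖ ≤ r := by
    have := mem_closedBall.mp hz
    rw [dist_eq_norm] at this
    simpa [sub_sub] using this
  have hinner : (0:ℝ) ≤ ⟪z - p, p - y⟫ := by
    have hsplit : ⟪z - p, p - y⟫
        = ⟪z - p - (r / d) • (p - y), p - y⟫ + (r / d) * ⟪p - y, p - y⟫ := by
      simp only [inner_sub_left, real_inner_smul_left]; ring
    have hCS : -(r * d) ≤ ⟪z - p - (r / d) • (p - y), p - y⟫ := by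
      have h1 := abs_real_inner_le_norm (z - p - (r / d) • (p - y)) (p - y)
      have h2 : ‖z - p - (r / d) • (p - y)‖ * ‖p - y‖ ≤ r * d := by
        rw [← hd]; exact mul_le_mul_of_nonneg_right hz' hdpos.le
      have := (abs_le.mp (h1.trans h2)).1
      linarith
    have hself : ⟪p - y, p - y⟫ = d ^ 2 := by
      rw [real_inner_self_eq_norm_sq, hd]
    rw [hsplit, hself]
    have : r / d * d ^ 2 = r * d := by field_simp
    rw [this]
    linarith
  have hsq : R ^ 2 < ‖z - y‖ ^ 2 := by
    have hzy : z - y = (z - p) + (p - y) := by abel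
    rw [hzy, norm_add_sq_real]
    nlinarith [norm_nonneg (z - p), sq_nonneg (‖z - p‖)]
  intro hmem
  have : ‖z - y‖ ≤ R := by
    have := mem_closedBall.mp hmem; rwa [dist_eq_norm] at this
  nlinarith [norm_nonneg (z - y)]

noncomputable def capMap (n : ℕ) (e : EuclideanSpace ℝ (Fin n)) (a r : ℝ) :
    EuclideanSpace ℝ (Fin n) →ₗ[ℝ] EuclideanSpace ℝ (Fin n) :=
  r • LinearMap.id + (a - r) • ((innerSL ℝ e).toLinearMap.smulRight e)

lemma capMap_apply (e : EuclideanSpace ℝ (Fin n)) (a r : ℝ) (z : EuclideanSpace ℝ (Fin n)) :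
    capMap n e a r z = r • z + (a - r) • (⟪e, z⟫ • e) := by
  simp [capMap]

lemma capMap_det (hn : 0 < n) (e : EuclideanSpace ℝ (Fin n)) (he : ‖e‖ = 1) {a r : ℝ}
    (hr : 0 < r) : LinearMap.det (capMap n e a r) = r ^ (n - 1) * a := by
  classical
  set u : Fin n → ℝ := fun i => e i with hu
  set b := (EuclideanSpace.basisFun (Fin n) ℝ).toBasis with hb
  have hee : u ⬝ᵥ u = 1 := by
    have h : ⟪e, e⟫ = 1 := by rw [real_inner_self_eq_norm_sq, he]; norm_num
    simp only [PiLp.inner_apply, RCLike.inner_apply, conj_trivial] at h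
    simp only [dotProduct, hu]
    exact h
  have hM : LinearMap.toMatrix b b (capMap n e a r)
      = r • ((1 : Matrix (Fin n) (Fin n) ℝ) + Matrix.vecMulVec (((a - r)/r) • u) u) := by
    ext i j
    simp only [LinearMap.toMatrix_apply, capMap_apply, hb, OrthonormalBasis.coe_toBasis,
      EuclideanSpace.basisFun_apply, EuclideanSpace.inner_single_right, EuclideanSpace.inner_single_left,
      OrthonormalBasis.coe_toBasis_repr_apply, OrthonormalBasis.repr_apply_apply,
      Matrix.smul_apply, Matrix.add_apply,
      Matrix.vecMulVec_apply, Matrix.one_apply, Pi.smul_apply, smul_eq_mul,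
      PiLp.add_apply, PiLp.smul_apply, EuclideanSpace.single_apply, hu, conj_trivial]
    by_cases hij : i = j <;> subst_vars <;> field_simp <;> ring
  have hdet : LinearMap.det (capMap n e a r)
      = Matrix.det (LinearMap.toMatrix b b (capMap n e a r)) := (LinearMap.det_toMatrix b _).symm
  rw [hdet, hM, Matrix.det_smul, Matrix.vecMulVec_eq Unit, Matrix.det_one_add_replicateCol_mul_replicateRow,
    dotProduct_smul, hee]
  obtain ⟨m, rfl⟩ : ∃ m, n = m + 1 := ⟨n - 1, (Nat.succ_pred_eq_of_pos hn).symm⟩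
  simp only [smul_eq_mul, mul_one, Nat.add_sub_cancel]
  field_simp
  rw [Fintype.card_fin]; ring

lemma ellipsoid_vol (hn : 0 < n) (e : EuclideanSpace ℝ (Fin n)) (he : ‖e‖ = 1) {a r : ℝ}
    (ha : 0 < a) (hr : 0 < r) (q : EuclideanSpace ℝ (Fin n)) :
    volume ((fun z => q + capMap n e a r z) '' closedBall 0 1)
      = ENNReal.ofReal (r ^ (n - 1) * a)
          * volume (closedBall (0 : EuclideanSpace ℝ (Fin n)) 1) := by
  have himg : (fun z => q + capMap n e a r z) '' closedBall 0 1
      = (fun w => q + w) '' ((capMap n e a r) '' closedBall 0 1) := by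
    rw [Set.image_image]
  rw [himg, Set.image_add_left, measure_preimage_add,
    Measure.addHaar_image_linearMap, capMap_det hn e he hr]
  congr 1
  rw [abs_of_pos (by positivity)]

end BallBodyAux

set_option maxHeartbeats 2000000 in
open Metric BallBodyAux in
theorem floatingBody_distance_bound (n : ℕ) (R : ℝ) (hR : 0 < R)
    (K : Set (EuclideanSpace ℝ (Fin n))) (hK : IsBallConvexBody n R K)
    (h0 : 0 ∈ interior K) :
    ∃ γ > (0 : ℝ), ∃ δ₀ > (0 : ℝ), ∀ δ : ℝ, 0 < δ → δ ≤ δ₀ →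
      ∀ x ∈ frontier K, ∀ ν : EuclideanSpace ℝ (Fin n), ‖ν‖ = 1 →
        (∀ y ∈ K, ⟪y - x, ν⟫ ≤ 0) →
        ∀ ρ : ℝ, 0 < ρ → Metric.closedBall (x - ρ • ν) ρ ⊆ K →
        ∀ xδ ∈ segment ℝ 0 x ∩ frontier (ballFloatingBody n R δ K),
          ‖x - xδ‖ ≤ γ * ρ ^ (-((n : ℝ) - 1) / ((n : ℝ) + 1)) * δ ^ (2 / ((n : ℝ) + 1)) := by
  obtain hn0 | hn := Nat.eq_zero_or_pos n
  · -- dimension 0 : the space is a single point, `frontier K` is empty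
    subst hn0
    haveI : Subsingleton (EuclideanSpace ℝ (Fin 0)) :=
      ⟨fun a b => by ext i; exact i.elim0⟩
    refine ⟨1, one_pos, 1, one_pos, fun δ _ _ x hx => ?_⟩
    exfalso
    rw [← closure_diff_interior] at hx
    exact hx.2 (Subsingleton.elim (0 : EuclideanSpace ℝ (Fin 0)) x ▸ h0)
  -- basic data
  have hKclosed : IsClosed K := hK.1.isClosed
  have hKconv : Convex ℝ K := by
    rw [hK.2.2]
    exact convex_iInter fun y => convex_iInter fun _ => convex_closedBall y R
  obtain ⟨r₁, hr₁pos, hr₁⟩ : ∃ ε > 0, ball (0 : EuclideanSpace ℝ (Fin n)) ε ⊆ K :=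
    Metric.mem_nhds_iff.mp (mem_interior_iff_mem_nhds.mp h0)
  set r₀ : ℝ := r₁ / 2 with hr₀def
  have hr₀ : 0 < r₀ := by positivity
  have hr₀K : closedBall (0 : EuclideanSpace ℝ (Fin n)) r₀ ⊆ K :=
    (closedBall_subset_ball (by simp [hr₀def]; linarith)).trans hr₁
  obtain ⟨D₀, hD₀⟩ := hK.1.isBounded.subset_closedBall 0
  set D : ℝ := max D₀ r₀ with hDdef
  have hDpos : 0 < D := lt_of_lt_of_le hr₀ (le_max_right _ _)
  have hr₀D : r₀ ≤ D := le_max_right _ _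
  have hKD : K ⊆ closedBall 0 D :=
    hD₀.trans (closedBall_subset_closedBall (le_max_left _ _))
  set ω : ℝ := (volume (closedBall (0 : EuclideanSpace ℝ (Fin n)) 1)).toReal with hωdef
  have hω : 0 < ω := ENNReal.toReal_pos
    (ne_of_gt (measure_closedBall_pos volume _ one_pos)) measure_closedBall_lt_top.ne
  have hΩ : volume (closedBall (0 : EuclideanSpace ℝ (Fin n)) 1) = ENNReal.ofReal ω := by
    rw [hωdef, ENNReal.ofReal_toReal measure_closedBall_lt_top.ne]
  have hvolCB : ∀ (c : EuclideanSpace ℝ (Fin n)) {s : ℝ}, 0 ≤ s →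
      volume (closedBall c s) = ENNReal.ofReal (s ^ n * ω) := by
    intro c s hs
    rw [Measure.addHaar_closedBall' volume c hs, finrank_euclideanSpace_fin, hΩ,
      ← ENNReal.ofReal_mul (by positivity)]
  set κ : ℝ := r₀ / (4 * D) with hκdef
  have hκ : 0 < κ := by positivity
  -- the constants
  set cA : ℝ := ω * (1/8) * (1/2) ^ (n-1) * ((κ/4) ^ (((n:ℝ)+1)/2)) with hcAdef
  have hcA : 0 < cA := by
    have := Real.rpow_pos_of_pos (show (0:ℝ) < κ/4 by positivity) (((n:ℝ)+1)/2)
    positivity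
  set γA : ℝ := (1/cA) ^ (2/((n:ℝ)+1)) with hγAdef
  have hγA : 0 < γA := Real.rpow_pos_of_pos (by positivity) _
  set cB1 : ℝ := κ * r₀ / (4 * (r₀ + D)) with hcB1def
  have hcB1 : 0 < cB1 := by positivity
  set CB : ℝ := (κ/4) ^ (-(((n:ℝ)-1)/((n:ℝ)+1))) * (ω * cB1 ^ n) ^ (2/((n:ℝ)+1)) with hCBdef
  have hCB : 0 < CB := by
    have h1 := Real.rpow_pos_of_pos (show (0:ℝ) < κ/4 by positivity) (-(((n:ℝ)-1)/((n:ℝ)+1)))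
    have h2 := Real.rpow_pos_of_pos (show (0:ℝ) < ω * cB1 ^ n by positivity) (2/((n:ℝ)+1))
    positivity
  set γB : ℝ := CB⁻¹ with hγBdef
  have hγB : 0 < γB := by positivity
  set γ : ℝ := max γA γB with hγdef
  have hγ : 0 < γ := lt_of_lt_of_le hγA (le_max_left _ _)
  set δ₀ : ℝ := ω * (r₀/8) ^ n / 2 with hδ₀def
  have hδ₀pos : 0 < δ₀ := by positivity
  clear_value r₀ D ω κ cA γA cB1 CB γB γ δ₀
  refine ⟨γ, hγ, δ₀, hδ₀pos, fun δ hδ hδδ₀ x hx ν hν hνout ρ hρ hballρ xδ hxδ => ?_⟩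
  obtain ⟨hseg, hfront⟩ := hxδ
  obtain ⟨aσ, σ, haσ, hσ0, haσσ, hxδeq⟩ := hseg
  rw [smul_zero, zero_add] at hxδeq
  have hσ1 : σ ≤ 1 := by linarith
  set t : ℝ := ‖x - xδ‖ with htdef
  -- trivial case t = 0
  rcases eq_or_lt_of_le (norm_nonneg (x - xδ)) with ht0 | ht0
  · have ht0' : t = 0 := by rw [htdef, ← ht0]
    rw [ht0']
    have h1 : (0:ℝ) ≤ ρ ^ (-((n : ℝ) - 1) / ((n : ℝ) + 1)) := Real.rpow_nonneg hρ.le _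
    have h2 : (0:ℝ) ≤ δ ^ (2 / ((n : ℝ) + 1)) := Real.rpow_nonneg hδ.le _
    positivity
  rw [← htdef] at ht0
  have hxK : x ∈ K := hKclosed.frontier_subset hx
  have hxD : ‖x‖ ≤ D := mem_closedBall_zero_iff.mp (hKD hxK)
  have hteq : t = (1 - σ) * ‖x‖ := by
    have hxx : x - σ • x = (1 - σ) • x := by rw [sub_smul, one_smul]
    rw [htdef, ← hxδeq, hxx, norm_smul, Real.norm_eq_abs, abs_of_nonneg (by linarith)]
  have htD : t ≤ D := by
    have h1 : (1 - σ) * ‖x‖ ≤ 1 * ‖x‖ :=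
      mul_le_mul_of_nonneg_right (by linarith) (norm_nonneg _)
    rw [hteq]; rw [one_mul] at h1; linarith
  -- every δ-admissible ball contains the ball of radius r₀/4 around the origin
  have hin : ∀ y : EuclideanSpace ℝ (Fin n),
      volume (K \ closedBall y R) ≤ ENNReal.ofReal δ →
      closedBall (0 : EuclideanSpace ℝ (Fin n)) (r₀/4) ⊆ closedBall y R := by
    intro y hy p hp
    by_contra hpy
    have hpy' : R < ‖p - y‖ := by
      rw [mem_closedBall, dist_eq_norm, not_le] at hpy; exact hpy
    set c' := p + ((r₀/8) / ‖p - y‖) • (p - y) with hc'def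
    have hnp : ‖p‖ ≤ r₀/4 := mem_closedBall_zero_iff.mp hp
    have hsub : closedBall c' (r₀/8) ⊆ K \ closedBall y R := by
      intro z hz
      refine ⟨hr₀K ?_, escape_ball (by positivity) hpy' hR.le z hz⟩
      have h1 : ‖z - c'‖ ≤ r₀/8 := by
        have := mem_closedBall.mp hz; rwa [dist_eq_norm] at this
      have hc'n : ‖c'‖ ≤ r₀/4 + r₀/8 := by
        rw [hc'def]
        refine (norm_add_le _ _).trans (add_le_add hnp ?_)
        rw [norm_smul, Real.norm_eq_abs, abs_of_nonneg (by positivity)]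
        rw [div_mul_cancel₀ _ (ne_of_gt (hR.trans hpy'))]
      rw [mem_closedBall_zero_iff]
      calc ‖z‖ ≤ ‖z - c'‖ + ‖c'‖ := by
            simpa using norm_add_le (z - c') c'
        _ ≤ r₀/8 + (r₀/4 + r₀/8) := add_le_add h1 hc'n
        _ ≤ r₀ := by linarith
    have hchain : ENNReal.ofReal ((r₀/8) ^ n * ω) ≤ ENNReal.ofReal δ := by
      calc ENNReal.ofReal ((r₀/8) ^ n * ω) = volume (closedBall c' (r₀/8)) :=
            (hvolCB c' (by positivity)).symm
        _ ≤ volume (K \ closedBall y R) := measure_mono hsub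
        _ ≤ ENNReal.ofReal δ := hy
    have hreal : (r₀/8) ^ n * ω ≤ δ := by
      have := ENNReal.toReal_mono ENNReal.ofReal_ne_top hchain
      rwa [ENNReal.toReal_ofReal (by positivity), ENNReal.toReal_ofReal hδ.le] at this
    have : 0 < (r₀/8) ^ n * ω := by positivity
    rw [hδ₀def] at hδδ₀
    nlinarith
  -- xδ is not in the interior of the floating body, and is far from the origin
  have hxδint : xδ ∉ interior (ballFloatingBody n R δ K) := by
    rw [← closure_diff_interior] at hfront; exact hfront.2
  have hxδnorm : r₀/4 ≤ ‖xδ‖ := by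
    by_contra hcon
    push_neg at hcon
    apply hxδint
    have hb : ball (0 : EuclideanSpace ℝ (Fin n)) (r₀/4) ⊆ ballFloatingBody n R δ K := by
      intro z hz
      exact Set.mem_iInter₂.mpr fun y hy => hin y hy (ball_subset_closedBall hz)
    exact interior_maximal hb isOpen_ball (mem_ball_zero_iff.mpr hcon)
  have hxnorm : 0 < ‖x‖ := by
    rcases eq_or_lt_of_le (norm_nonneg x) with h | h
    · exfalso
      have hx0 : x = 0 := norm_eq_zero.mp h.symm
      have hxδ0 : ‖xδ‖ = 0 := by rw [← hxδeq, hx0, smul_zero, norm_zero]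
      rw [hxδ0] at hxδnorm; linarith
    · exact h
  have hσx : σ * ‖x‖ = ‖xδ‖ := by
    rw [← hxδeq, norm_smul, Real.norm_eq_abs, abs_of_nonneg hσ0]
  have hσpos : 0 < σ := by
    rcases eq_or_lt_of_le hσ0 with h | h
    · exfalso; rw [← h, zero_mul] at hσx; rw [← hσx] at hxδnorm; linarith
    · exact h
  -- geometric quantities
  set hh : ℝ := κ * t / 2 with hhdef
  have hhpos : 0 < hh := by positivity
  set s₀ : ℝ := κ * t / 4 with hs₀def
  have hs₀pos : 0 < s₀ := by positivity
  set ε : ℝ := σ * κ * t / 2 with hεdef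
  have hεpos : 0 < ε := by positivity
  clear_value t hh s₀ ε
  -- a nearly-touching admissible ball
  have hexist : ∃ y : EuclideanSpace ℝ (Fin n),
      volume (K \ closedBall y R) ≤ ENNReal.ofReal δ ∧ R - ε < ‖xδ - y‖ := by
    by_contra hcon
    push_neg at hcon
    apply hxδint
    have hb : ball xδ ε ⊆ ballFloatingBody n R δ K := by
      intro z hz
      refine Set.mem_iInter₂.mpr fun y hy => ?_
      have h1 := hcon y hy
      have h2 : dist z xδ < ε := mem_ball.mp hz
      rw [mem_closedBall]
      calc dist z y ≤ dist z xδ + dist xδ y := dist_triangle _ _ _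
        _ ≤ ε + (R - ε) := by
            rw [dist_eq_norm]; exact add_le_add h2.le h1
        _ = R := by ring
    exact interior_maximal hb isOpen_ball (mem_ball_self hεpos)
  obtain ⟨y, hyvol, hyd⟩ := hexist
  -- the admissible ball is almost centered
  have hynorm : ‖y‖ ≤ R - r₀/4 := by
    rcases eq_or_ne y 0 with hy0 | hy0
    · subst hy0
      set i0 : Fin n := ⟨0, hn⟩
      have hp : ((r₀/4) • EuclideanSpace.single i0 (1:ℝ)) ∈
          closedBall (0 : EuclideanSpace ℝ (Fin n)) (r₀/4) := by
        rw [mem_closedBall_zero_iff, norm_smul, Real.norm_eq_abs,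
          abs_of_nonneg (by positivity), EuclideanSpace.norm_single]
        simp
      have := hin 0 hyvol hp
      rw [mem_closedBall_zero_iff, norm_smul, Real.norm_eq_abs,
        abs_of_nonneg (by positivity), EuclideanSpace.norm_single] at this
      simp at this
      simp
      linarith
    · have hyn : 0 < ‖y‖ := norm_pos_iff.mpr hy0
      set p := -((r₀/4) / ‖y‖) • y with hpdef
      have hp : p ∈ closedBall (0 : EuclideanSpace ℝ (Fin n)) (r₀/4) := by
        rw [mem_closedBall_zero_iff, hpdef, norm_smul, Real.norm_eq_abs, abs_neg,
          abs_of_nonneg (by positivity), div_mul_cancel₀]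
        positivity
      have h2 := hin y hyvol hp
      rw [mem_closedBall, dist_eq_norm] at h2
      have h3 : p - y = -(((r₀/4) / ‖y‖) + 1) • y := by
        rw [hpdef]; module
      rw [h3, norm_smul, Real.norm_eq_abs, abs_neg, abs_of_nonneg (by positivity),
        add_mul, div_mul_cancel₀ _ (ne_of_gt hyn), one_mul] at h2
      linarith
  -- distance from x to the center of the admissible ball
  set d : ℝ := ‖x - y‖ with hddef
  have hxδy : ‖xδ - y‖ ≤ σ * d + (1 - σ) * ‖y‖ := by
    have hid : xδ - y = σ • (x - y) + (1 - σ) • (-y) := by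
      rw [← hxδeq]; module
    rw [hid]
    refine (norm_add_le _ _).trans ?_
    rw [norm_smul, norm_smul, Real.norm_eq_abs, Real.norm_eq_abs, norm_neg,
      abs_of_nonneg hσ0, abs_of_nonneg (by linarith), hddef]
  have htlee : t ≤ (1 - σ) * D := by
    rw [hteq]
    exact mul_le_mul_of_nonneg_left hxD (by linarith)
  have hκt : κ * t ≤ (1 - σ) * (r₀/4) := by
    rw [hκdef, div_mul_eq_mul_div, div_le_iff₀ (by positivity : (0:ℝ) < 4*D)]
    have := mul_le_mul_of_nonneg_left htlee hr₀.le
    linarith only [this]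
  have hd : R + hh ≤ d := by
    have h3 : (1 - σ) * ‖y‖ ≤ (1 - σ) * (R - r₀/4) :=
      mul_le_mul_of_nonneg_left hynorm (by linarith)
    have h2 : R - ε < σ * d + (1 - σ) * (R - r₀/4) := by linarith [hyd, hxδy]
    have e1 : σ * (κ * t) ≤ κ * t :=
      mul_le_of_le_one_left (by positivity : (0:ℝ) ≤ κ * t) hσ1
    have h4 : σ * (R + hh) ≤ σ * d := by
      rw [hhdef]
      rw [hεdef] at h2
      linarith only [e1, hκt, h2]
    exact le_of_mul_le_mul_left h4 hσpos
  have hdpos : 0 < d := lt_of_lt_of_le (by positivity) hd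
  set e : EuclideanSpace ℝ (Fin n) := d⁻¹ • (x - y) with hedef
  have he : ‖e‖ = 1 := by
    rw [hedef, norm_smul, Real.norm_eq_abs, abs_of_nonneg (by positivity), ← hddef,
      inv_mul_cancel₀ (ne_of_gt hdpos)]
  have hxye : x - y = d • e := by
    rw [hedef, smul_smul, mul_inv_cancel₀ (ne_of_gt hdpos), one_smul]
  clear_value d e
  rw [neg_div]
  rcases le_or_gt s₀ ρ with hcase | hcase
  · -- Case A : s₀ ≤ ρ, cap estimate via an inscribed ellipsoid
    set a : ℝ := s₀/8 with hadef
    have ha : 0 < a := by positivity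
    have hsqp : 0 < Real.sqrt (ρ * s₀) := Real.sqrt_pos.mpr (by positivity)
    set r : ℝ := Real.sqrt (ρ * s₀) / 2 with hrdef
    have hrpos : 0 < r := by positivity
    have hr2 : r ^ 2 = ρ * s₀ / 4 := by
      rw [hrdef, div_pow, Real.sq_sqrt (by positivity : (0:ℝ) ≤ ρ * s₀)]
      norm_num
    set c : EuclideanSpace ℝ (Fin n) := x - ρ • ν with hcdef
    set q : EuclideanSpace ℝ (Fin n) := c + (ρ - (3/4) * s₀) • e with hqdef
    clear_value a r c q
    have hee : ⟪e, e⟫ = (1:ℝ) := by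
      rw [real_inner_self_eq_norm_sq, he]; norm_num
    have hEsub : (fun z => q + capMap n e a r z) '' Metric.closedBall 0 1
        ⊆ K \ closedBall y R := by
      rintro w ⟨z, hz, rfl⟩
      have hz1 : ‖z‖ ≤ 1 := mem_closedBall_zero_iff.mp hz
      set ζ : ℝ := ⟪e, z⟫ with hζdef
      set v : EuclideanSpace ℝ (Fin n) := z - ζ • e with hvdef
      have hζabs : |ζ| ≤ 1 := by
        rw [hζdef]
        calc |⟪e, z⟫| ≤ ‖e‖ * ‖z‖ := abs_real_inner_le_norm e z
          _ ≤ 1 := by rw [he, one_mul]; exact hz1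
      obtain ⟨hζl, hζu⟩ := abs_le.mp hζabs
      have hev : ⟪e, v⟫ = 0 := by
        rw [hvdef, inner_sub_right, real_inner_smul_right, hee]; ring
      have hv1 : ‖v‖ ^ 2 ≤ 1 := by
        have hze : ⟪z, e⟫ = ζ := by rw [hζdef, real_inner_comm]
        have hexp : ‖v‖ ^ 2 = ‖z‖^2 - ζ^2 := by
          rw [hvdef, norm_sub_sq_real, real_inner_smul_right, hze, norm_smul,
            Real.norm_eq_abs, he, mul_one, sq_abs]
          ring
        have hz2 : ‖z‖^2 ≤ 1 := by nlinarith only [hz1, norm_nonneg z]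
        linarith only [hexp, hz2, sq_nonneg ζ]
      set β : ℝ := ρ - (3/4) * s₀ + a * ζ with hβdef
      clear_value ζ v β
      have haζl : a * (-1) ≤ a * ζ := mul_le_mul_of_nonneg_left hζl ha.le
      have haζu : a * ζ ≤ a * 1 := mul_le_mul_of_nonneg_left hζu ha.le
      have hβl : ρ - (7/8) * s₀ ≤ β := by
        rw [hβdef]; linarith only [haζl, hadef]
      have hβu : β ≤ ρ - (5/8) * s₀ := by
        rw [hβdef]; linarith only [haζu, hadef]
      have hβ0 : 0 ≤ β := by linarith only [hβl, hcase, hs₀pos]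
      have hwc : (q + capMap n e a r z) - c = β • e + r • v := by
        rw [capMap_apply, hqdef, hβdef, hvdef, hζdef]
        module
      have hbe : ‖β • e‖ = |β| := by rw [norm_smul, Real.norm_eq_abs, he, mul_one]
      have hrv : ‖r • v‖ = |r| * ‖v‖ := by rw [norm_smul, Real.norm_eq_abs]
      have hn2 : ‖(q + capMap n e a r z) - c‖ ^ 2 = β^2 + r^2 * ‖v‖^2 := by
        rw [hwc, norm_add_sq_real, real_inner_smul_left, real_inner_smul_right, hev,
          hbe, hrv]
        rw [mul_pow, sq_abs, sq_abs]
        ring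
      have hwball : (q + capMap n e a r z) ∈ closedBall c ρ := by
        rw [mem_closedBall, dist_eq_norm]
        have hβsq : β^2 ≤ (ρ - (5/8)*s₀)^2 := pow_le_pow_left₀ hβ0 hβu 2
        have h5 : r^2*‖v‖^2 ≤ r^2 := by
          calc r^2*‖v‖^2 ≤ r^2 * 1 := mul_le_mul_of_nonneg_left hv1 (sq_nonneg r)
            _ = r^2 := mul_one _
        have hss : s₀ * s₀ ≤ ρ * s₀ := mul_le_mul_of_nonneg_right hcase hs₀pos.le
        have h6 : (ρ - (5/8)*s₀)^2 + ρ*s₀/4 ≤ ρ^2 := by nlinarith only [hss, hs₀pos, hcase]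
        have hsq : ‖(q + capMap n e a r z) - c‖^2 ≤ ρ^2 := by
          rw [hn2]; linarith only [hβsq, h5, h6, hr2]
        have := Real.sqrt_le_sqrt hsq
        rwa [Real.sqrt_sq (norm_nonneg _), Real.sqrt_sq hρ.le] at this
      have hinner : ⟪x - (q + capMap n e a r z), e⟫ < s₀ := by
        have hxw : x - (q + capMap n e a r z) = ρ • ν - (β • e + r • v) := by
          have hsplit : x - (q + capMap n e a r z)
              = (x - c) - ((q + capMap n e a r z) - c) := by abel
          rw [hsplit, hwc, hcdef]
          module
        rw [hxw, inner_sub_left, inner_add_left]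
        have i2 : ⟪β • e, e⟫ = β := by rw [real_inner_smul_left, hee, mul_one]
        have i3 : ⟪r • v, e⟫ = (0:ℝ) := by
          rw [real_inner_smul_left, real_inner_comm, hev, mul_zero]
        rw [real_inner_smul_left, i2, i3]
        have hνe : ⟪ν, e⟫ ≤ 1 := by
          have := real_inner_le_norm ν e
          rwa [hν, he, one_mul] at this
        have : ρ * ⟪ν, e⟫ ≤ ρ * 1 := mul_le_mul_of_nonneg_left hνe hρ.le
        linarith only [this, hβl, hs₀pos]
      have houtsq : R^2 < ‖(q + capMap n e a r z) - y‖^2 := by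
        have hident : (q + capMap n e a r z) - y
            = ((q + capMap n e a r z) - x) + (x - y) := by abel
        rw [hident, norm_add_sq_real, hxye, real_inner_smul_right]
        have h7 : ⟪(q + capMap n e a r z) - x, e⟫ = -⟪x - (q + capMap n e a r z), e⟫ := by
          rw [← inner_neg_left, neg_sub]
        have h8 : -(d*s₀) < d * ⟪(q + capMap n e a r z) - x, e⟫ := by
          rw [h7]
          have := mul_lt_mul_of_pos_left hinner hdpos
          linarith only [this]
        have h9 : (R + hh) * R ≤ d * (d - hh) := by
          have hge : R ≤ d - hh := by linarith only [hd]
          exact mul_le_mul hd hge hR.le (by positivity)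
        have h11 : d * hh = 2*(d*s₀) := by rw [hhdef, hs₀def]; ring
        have h12 : 0 < hh * R := mul_pos hhpos hR
        have hde : ‖d • e‖^2 = d^2 := by
          rw [norm_smul, Real.norm_eq_abs, he, mul_one, sq_abs]
        linarith only [h8, h9, h11, h12, hde, sq_nonneg ‖(q + capMap n e a r z) - x‖]
      have hout : (q + capMap n e a r z) ∉ closedBall y R := by
        intro hmem
        have h12 : ‖(q + capMap n e a r z) - y‖ ≤ R := by
          have := mem_closedBall.mp hmem; rwa [dist_eq_norm] at this
        have := pow_le_pow_left₀ (norm_nonneg _) h12 2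
        linarith only [houtsq, this]
      exact ⟨hballρ hwball, hout⟩
    -- volume comparison
    have hvol : ENNReal.ofReal ((r ^ (n-1) * a) * ω) ≤ ENNReal.ofReal δ := by
      calc ENNReal.ofReal ((r ^ (n-1) * a) * ω)
          = volume ((fun z => q + capMap n e a r z) '' Metric.closedBall 0 1) := by
            rw [ellipsoid_vol hn e he ha hrpos q, hΩ, ← ENNReal.ofReal_mul (by positivity)]
        _ ≤ volume (K \ closedBall y R) := measure_mono hEsub
        _ ≤ ENNReal.ofReal δ := hyvol
    have hreal : r ^ (n-1) * a * ω ≤ δ := by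
      have := ENNReal.toReal_mono ENNReal.ofReal_ne_top hvol
      rwa [ENNReal.toReal_ofReal (by positivity), ENNReal.toReal_ofReal hδ.le] at this
    -- rpow bookkeeping
    have hsqrtpow : (Real.sqrt (ρ*s₀)) ^ (n-1) = (ρ*s₀) ^ (((n:ℝ)-1)/2) := by
      rw [← Real.rpow_natCast (Real.sqrt (ρ*s₀)) (n-1), Real.sqrt_eq_rpow,
        ← Real.rpow_mul (by positivity : (0:ℝ) ≤ ρ*s₀)]
      congr 1
      rw [Nat.cast_sub hn]
      push_cast; ring
    have hr_pow : r ^ (n-1)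
        = (1/2:ℝ)^(n-1) * (ρ ^ (((n:ℝ)-1)/2) * s₀ ^ (((n:ℝ)-1)/2)) := by
      rw [hrdef, div_pow, hsqrtpow, Real.mul_rpow hρ.le hs₀pos.le, one_div_pow]
      ring
    have hs1 : s₀ ^ (((n:ℝ)-1)/2) * s₀ = s₀ ^ (((n:ℝ)+1)/2) := by
      have h := Real.rpow_add hs₀pos (((n:ℝ)-1)/2) 1
      rw [Real.rpow_one] at h
      rw [← h]
      congr 1
      ring
    have hs2 : s₀ ^ (((n:ℝ)+1)/2) = (κ/4) ^ (((n:ℝ)+1)/2) * t ^ (((n:ℝ)+1)/2) := by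
      have hs3 : s₀ = (κ/4) * t := by rw [hs₀def]; ring
      rw [hs3, Real.mul_rpow (by positivity) ht0.le]
    have key : cA * (ρ ^ (((n:ℝ)-1)/2) * t ^ (((n:ℝ)+1)/2)) ≤ δ := by
      have e1 : r^(n-1) * a * ω
          = cA * (ρ ^ (((n:ℝ)-1)/2) * t ^ (((n:ℝ)+1)/2)) := by
        calc r^(n-1) * a * ω
            = (ω * (1/8) * (1/2:ℝ)^(n-1))
                * (ρ ^ (((n:ℝ)-1)/2) * (s₀ ^ (((n:ℝ)-1)/2) * s₀)) := by
              rw [hr_pow, hadef]; ring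
          _ = (ω * (1/8) * (1/2:ℝ)^(n-1))
                * (ρ ^ (((n:ℝ)-1)/2) * ((κ/4) ^ (((n:ℝ)+1)/2) * t ^ (((n:ℝ)+1)/2))) := by
              rw [hs1, hs2]
          _ = cA * (ρ ^ (((n:ℝ)-1)/2) * t ^ (((n:ℝ)+1)/2)) := by rw [hcAdef]; ring
      rw [← e1]; exact hreal
    have hρA : (0:ℝ) < ρ ^ (((n:ℝ)-1)/2) := Real.rpow_pos_of_pos hρ _
    have hABpos : (0:ℝ) < cA * ρ ^ (((n:ℝ)-1)/2) := by positivity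
    have hkey2 : t ^ (((n:ℝ)+1)/2) ≤ δ / (cA * ρ ^ (((n:ℝ)-1)/2)) := by
      rw [le_div_iff₀ hABpos]
      calc t ^ (((n:ℝ)+1)/2) * (cA * ρ ^ (((n:ℝ)-1)/2))
          = cA * (ρ ^ (((n:ℝ)-1)/2) * t ^ (((n:ℝ)+1)/2)) := by ring
        _ ≤ δ := key
    have hmono := Real.rpow_le_rpow (Real.rpow_nonneg ht0.le _) hkey2
      (by positivity : (0:ℝ) ≤ 2/((n:ℝ)+1))
    have hBE : (((n:ℝ)+1)/2) * (2/((n:ℝ)+1)) = 1 := by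
      have hne : ((n:ℝ)+1) ≠ 0 := by positivity
      field_simp
    rw [← Real.rpow_mul ht0.le, hBE, Real.rpow_one] at hmono
    have hrhs : (δ / (cA * ρ ^ (((n:ℝ)-1)/2))) ^ (2/((n:ℝ)+1))
        = γA * ρ ^ (-(((n:ℝ)-1) / ((n:ℝ)+1))) * δ ^ (2/((n:ℝ)+1)) := by
      have hsplit : δ / (cA * ρ ^ (((n:ℝ)-1)/2))
          = (1/cA) * (ρ ^ (-(((n:ℝ)-1)/2)) * δ) := by
        rw [Real.rpow_neg hρ.le]
        field_simp
      rw [hsplit, Real.mul_rpow (by positivity) (by positivity),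
        Real.mul_rpow (by positivity) hδ.le, ← Real.rpow_mul hρ.le]
      rw [show (-(((n:ℝ)-1)/2)) * (2/((n:ℝ)+1)) = -(((n:ℝ)-1) / ((n:ℝ)+1)) from by
        field_simp]
      rw [hγAdef]
      ring
    rw [hrhs] at hmono
    have h2 : (0:ℝ) ≤ ρ ^ (-(((n:ℝ)-1) / ((n:ℝ)+1))) := Real.rpow_nonneg hρ.le _
    have h3 : (0:ℝ) ≤ δ ^ (2/((n:ℝ)+1)) := Real.rpow_nonneg hδ.le _
    calc t ≤ γA * ρ ^ (-(((n:ℝ)-1) / ((n:ℝ)+1))) * δ ^ (2/((n:ℝ)+1)) := hmono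
      _ ≤ γ * ρ ^ (-(((n:ℝ)-1) / ((n:ℝ)+1))) * δ ^ (2/((n:ℝ)+1)) := by
          have hγAle : γA ≤ γ := by rw [hγdef]; exact le_max_left _ _
          exact mul_le_mul_of_nonneg_right (mul_le_mul_of_nonneg_right hγAle h2) h3
  · -- Case B : ρ < s₀, cone estimate
    have hn1 : (1:ℝ) ≤ (n:ℝ) := by exact_mod_cast hn
    have hrD : (0:ℝ) < r₀ + D := by positivity
    set lam : ℝ := hh/(2*(r₀ + D)) with hlamdef
    have hlam0 : 0 < lam := by positivity
    have hκtr : κ * t ≤ r₀/4 := by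
      have h2 : (1-σ)*(r₀/4) ≤ r₀/4 :=
        mul_le_of_le_one_left (by positivity) (by linarith : 1 - σ ≤ 1)
      linarith only [hκt, h2]
    have hlam1 : lam ≤ 1 := by
      rw [hlamdef, div_le_one (by positivity)]
      rw [hhdef]
      linarith only [hκtr, hr₀, hDpos, hr₀D]
    have hlamr : lam * (r₀ + D) = hh/2 := by
      rw [hlamdef]
      field_simp
    clear_value lam
    have hBsub : closedBall ((1 - lam) • x) (lam * r₀) ⊆ K \ closedBall y R := by
      intro z hz
      have hz1 : ‖z - (1 - lam) • x‖ ≤ lam * r₀ := by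
        have := mem_closedBall.mp hz; rwa [dist_eq_norm] at this
      constructor
      · have hwnorm : ‖lam⁻¹ • (z - (1 - lam) • x)‖ ≤ r₀ := by
          rw [norm_smul, Real.norm_eq_abs, abs_of_nonneg (by positivity)]
          rw [inv_mul_le_iff₀ hlam0]
          exact hz1
        have hwK : lam⁻¹ • (z - (1 - lam) • x) ∈ K :=
          hr₀K (mem_closedBall_zero_iff.mpr hwnorm)
        have hcomb := hKconv hxK hwK (by linarith : (0:ℝ) ≤ 1 - lam) hlam0.le (by ring)
        have hzeq : (1 - lam) • x + lam • (lam⁻¹ • (z - (1 - lam) • x)) = z := by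
          rw [smul_inv_smul₀ (ne_of_gt hlam0)]; abel
        rwa [hzeq] at hcomb
      · intro hmem
        have hzx : ‖z - x‖ ≤ hh/2 := by
          have h2 : ‖z - x‖ ≤ ‖z - (1-lam) • x‖ + ‖(1-lam) • x - x‖ := by
            have hzz : z - x = (z - (1-lam) • x) + ((1-lam) • x - x) := by abel
            rw [hzz]; exact norm_add_le _ _
          have h3 : (1-lam) • x - x = (-lam) • x := by module
          have h4 : ‖(-lam) • x‖ = lam * ‖x‖ := by
            rw [norm_smul, Real.norm_eq_abs, abs_neg, abs_of_nonneg hlam0.le]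
          have h5 : lam * ‖x‖ ≤ lam * D := mul_le_mul_of_nonneg_left hxD hlam0.le
          have h6 : lam * r₀ + lam * D = hh/2 := by rw [← hlamr]; ring
          rw [h3, h4] at h2
          linarith only [h2, hz1, h5, h6]
        have hzy : ‖z - y‖ ≤ R := by
          have := mem_closedBall.mp hmem; rwa [dist_eq_norm] at this
        have h7 : d - ‖x - z‖ ≤ ‖z - y‖ := by
          have h8 : ‖x - y‖ - ‖x - z‖ ≤ ‖(x - y) - (x - z)‖ := norm_sub_norm_le _ _
          have h9 : (x - y) - (x - z) = z - y := by abel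
          rw [h9, ← hddef] at h8
          exact h8
        have h10 : ‖x - z‖ = ‖z - x‖ := norm_sub_rev x z
        linarith only [h7, hzy, hzx, hd, hhpos, h10]
    have hvolB : ENNReal.ofReal ((lam * r₀)^n * ω) ≤ ENNReal.ofReal δ := by
      calc ENNReal.ofReal ((lam * r₀)^n * ω)
          = volume (closedBall ((1 - lam) • x) (lam * r₀)) :=
            (hvolCB _ (by positivity)).symm
        _ ≤ volume (K \ closedBall y R) := measure_mono hBsub
        _ ≤ ENNReal.ofReal δ := hyvol
    have hrealB : (lam * r₀)^n * ω ≤ δ := by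
      have := ENNReal.toReal_mono ENNReal.ofReal_ne_top hvolB
      rwa [ENNReal.toReal_ofReal (by positivity), ENNReal.toReal_ofReal hδ.le] at this
    have hlamr₀ : lam * r₀ = cB1 * t := by
      rw [hlamdef, hhdef, hcB1def]
      field_simp
      ring
    have hδE : (ω * (cB1*t)^n) ^ (2/((n:ℝ)+1)) ≤ δ ^ (2/((n:ℝ)+1)) := by
      apply Real.rpow_le_rpow (by positivity) ?_ (by positivity)
      calc ω * (cB1*t)^n = (cB1*t)^n * ω := by ring
        _ = (lam*r₀)^n * ω := by rw [hlamr₀]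
        _ ≤ δ := hrealB
    have hA'nn : (0:ℝ) ≤ ((n:ℝ)-1)/((n:ℝ)+1) :=
      div_nonneg (by linarith) (by positivity)
    have hbase : ρ ^ (((n:ℝ)-1)/((n:ℝ)+1)) ≤ s₀ ^ (((n:ℝ)-1)/((n:ℝ)+1)) :=
      Real.rpow_le_rpow hρ.le hcase.le hA'nn
    have hρE : s₀ ^ (-(((n:ℝ)-1)/((n:ℝ)+1))) ≤ ρ ^ (-(((n:ℝ)-1)/((n:ℝ)+1))) := by
      rw [Real.rpow_neg hρ.le, Real.rpow_neg hs₀pos.le]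
      exact inv_anti₀ (Real.rpow_pos_of_pos hρ _) hbase
    have hs3 : s₀ = (κ/4) * t := by rw [hs₀def]; ring
    have hEeq : (ω * (cB1*t)^n) ^ (2/((n:ℝ)+1))
        = ω ^ (2/((n:ℝ)+1)) * (cB1 ^ ((n:ℝ)*(2/((n:ℝ)+1))) * t ^ ((n:ℝ)*(2/((n:ℝ)+1)))) := by
      rw [Real.mul_rpow hω.le (by positivity), ← Real.rpow_natCast (cB1*t) n,
        ← Real.rpow_mul (by positivity), Real.mul_rpow hcB1.le ht0.le]
    have hCBeq : CB = (κ/4) ^ (-(((n:ℝ)-1)/((n:ℝ)+1)))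
        * (ω ^ (2/((n:ℝ)+1)) * cB1 ^ ((n:ℝ)*(2/((n:ℝ)+1)))) := by
      rw [hCBdef, Real.mul_rpow hω.le (by positivity), ← Real.rpow_natCast cB1 n,
        ← Real.rpow_mul hcB1.le]
    have htt : t ^ (-(((n:ℝ)-1)/((n:ℝ)+1))) * t ^ ((n:ℝ)*(2/((n:ℝ)+1))) = t := by
      rw [← Real.rpow_add ht0]
      rw [show -(((n:ℝ)-1)/((n:ℝ)+1)) + (n:ℝ)*(2/((n:ℝ)+1)) = 1 from by
        have hne : ((n:ℝ)+1) ≠ 0 := by positivity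
        field_simp
        ring]
      exact Real.rpow_one t
    have hmid : s₀ ^ (-(((n:ℝ)-1)/((n:ℝ)+1))) * ((ω * (cB1*t)^n) ^ (2/((n:ℝ)+1)))
        = CB * t := by
      rw [hs3, Real.mul_rpow (show (0:ℝ) ≤ κ/4 by positivity) ht0.le, hEeq]
      calc ((κ/4) ^ (-(((n:ℝ)-1)/((n:ℝ)+1))) * t ^ (-(((n:ℝ)-1)/((n:ℝ)+1))))
            * (ω ^ (2/((n:ℝ)+1)) * (cB1 ^ ((n:ℝ)*(2/((n:ℝ)+1))) * t ^ ((n:ℝ)*(2/((n:ℝ)+1)))))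
          = ((κ/4) ^ (-(((n:ℝ)-1)/((n:ℝ)+1)))
              * (ω ^ (2/((n:ℝ)+1)) * cB1 ^ ((n:ℝ)*(2/((n:ℝ)+1)))))
            * (t ^ (-(((n:ℝ)-1)/((n:ℝ)+1))) * t ^ ((n:ℝ)*(2/((n:ℝ)+1)))) := by ring
        _ = ((κ/4) ^ (-(((n:ℝ)-1)/((n:ℝ)+1)))
              * (ω ^ (2/((n:ℝ)+1)) * cB1 ^ ((n:ℝ)*(2/((n:ℝ)+1))))) * t := by rw [htt]
        _ = CB * t := by rw [hCBeq]
    have hfin : t ≤ γB * (ρ ^ (-(((n:ℝ)-1)/((n:ℝ)+1))) * δ ^ (2/((n:ℝ)+1))) := by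
      have h3 : t = γB * (CB * t) := by
        rw [hγBdef, ← mul_assoc, inv_mul_cancel₀ (ne_of_gt hCB), one_mul]
      rw [h3, ← hmid]
      refine mul_le_mul_of_nonneg_left ?_ hγB.le
      exact mul_le_mul hρE hδE (by positivity) (Real.rpow_nonneg hρ.le _)
    calc t ≤ γB * (ρ ^ (-(((n:ℝ)-1)/((n:ℝ)+1))) * δ ^ (2/((n:ℝ)+1))) := hfin
      _ ≤ γ * (ρ ^ (-(((n:ℝ)-1)/((n:ℝ)+1))) * δ ^ (2/((n:ℝ)+1))) := by
          have hγBle : γB ≤ γ := by rw [hγdef]; exact le_max_right _ _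
          refine mul_le_mul_of_nonneg_right hγBle ?_
          have := Real.rpow_nonneg hρ.le (-(((n:ℝ)-1)/((n:ℝ)+1)))
          have := Real.rpow_nonneg hδ.le (2/((n:ℝ)+1))
          positivity
      _ = γ * ρ ^ (-(((n:ℝ)-1)/((n:ℝ)+1))) * δ ^ (2/((n:ℝ)+1)) := by ring
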